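/- Let r > 0 be real, q a natural number, Λ_R > 0, c ≥ 0, and let P be a polynomial of degree at most q with nonnegative coefficients. Then there exists a polynomial Q of degree at most q+1 with nonnegative coefficients, depending only on P, q, r, c and Λ_R, such that the following holds: for every f : ℝ → ℝ differentiable on [Λ_R, ∞) satisfying |x · f'(x)| ≤ x^r · P(Real.log(x/Λ_R)) for all x ≥ Λ_R, and |f(Λ_R)| ≤ c, one has |f(Λ)| ≤ Λ^r · Q(Real.log(Λ/Λ_R)) for all Λ ≥ Λ_R. -/

import Mathlib

open Polynomial Set

private lemma eval_nonneg_of_coeff_nonneg (Q : Polynomial ℝ) (h : ∀ k, 0 ≤ Q.coeff k)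
    {y : ℝ} (hy : 0 ≤ y) : 0 ≤ Q.eval y := by
  rw [Q.eval_eq_sum_range]
  exact Finset.sum_nonneg fun i _ => mul_nonneg (h i) (pow_nonneg hy i)

/-- Relevant case of Definition/Lemma 1: a coupling with
`|x f'(x)| ≤ x^r P(log(x/Λ_R))` on `[Λ_R, ∞)` and finite initial condition
`|f(Λ_R)| ≤ c` satisfies `|f(Λ)| ≤ Λ^r Q(log(Λ/Λ_R))` for some polynomial `Q`
of degree `≤ q+1` with nonnegative coefficients depending only on
`P`, `q`, `r`, `c`, `Λ_R`. -/
theorem relevant_coupling_estimate (r : ℝ) (hr : 0 < r) (q : ℕ)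
    (ΛR : ℝ) (hΛR : 0 < ΛR) (c : ℝ) (hc : 0 ≤ c)
    (P : Polynomial ℝ) (hPdeg : P.natDegree ≤ q) (hPpos : ∀ k, 0 ≤ P.coeff k) :
    ∃ Q : Polynomial ℝ, Q.natDegree ≤ q + 1 ∧ (∀ k, 0 ≤ Q.coeff k) ∧
      ∀ f f' : ℝ → ℝ,
        (∀ x ∈ Set.Ici ΛR, HasDerivWithinAt f (f' x) (Set.Ici ΛR) x) →
        (∀ x, ΛR ≤ x → |x * f' x| ≤ x ^ r * P.eval (Real.log (x / ΛR))) →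
        |f ΛR| ≤ c →
        ∀ Λ, ΛR ≤ Λ → |f Λ| ≤ Λ ^ r * Q.eval (Real.log (Λ / ΛR)) := by
  set Q : Polynomial ℝ := C (c * ΛR ^ (-r)) +
    ∑ k ∈ Finset.range (q + 1), C (P.coeff k / (k + 1)) * X ^ (k + 1) with hQ
  have hcoeff : ∀ j, 0 ≤ Q.coeff j := by
    intro j
    rw [hQ]
    simp only [coeff_add, coeff_C, Polynomial.finset_sum_coeff, coeff_C_mul, coeff_X_pow]
    apply add_nonneg
    · split
      · exact mul_nonneg hc (Real.rpow_nonneg hΛR.le _)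
      · exact le_refl 0
    · refine Finset.sum_nonneg fun k _ => ?_
      have : (0:ℝ) ≤ P.coeff k / (k + 1) := div_nonneg (hPpos k) (by positivity)
      split <;> simp [this]
  have hdeg : Q.natDegree ≤ q + 1 := by
    rw [hQ]
    refine (natDegree_add_le _ _).trans (max_le ((natDegree_C _).le.trans (Nat.zero_le _)) ?_)
    refine natDegree_sum_le_of_forall_le _ _ fun k hk => ?_
    exact (natDegree_C_mul_X_pow_le _ _).trans (Nat.succ_le_succ (Finset.mem_range_succ_iff.mp hk))
  have hder : derivative Q = P := by
    rw [hQ]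
    rw [map_add, derivative_C, zero_add, derivative_sum]
    have : ∀ k ∈ Finset.range (q + 1),
        derivative (C (P.coeff k / (k + 1)) * X ^ (k + 1)) = C (P.coeff k) * X ^ k := by
      intro k _
      rw [derivative_C_mul_X_pow]
      have h1 : (P.coeff k / (k + 1)) * ((k : ℝ) + 1) = P.coeff k :=
        div_mul_cancel₀ _ (by positivity)
      simp [h1]
    rw [Finset.sum_congr rfl this]
    conv_rhs => rw [P.as_sum_range' (q + 1) (Nat.lt_succ_of_le hPdeg)]
    simp [C_mul_X_pow_eq_monomial]
  have hQ0 : Q.eval 0 = c * ΛR ^ (-r) := by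
    rw [hQ]; simp [eval_finset_sum]
  refine ⟨Q, hdeg, hcoeff, ?_⟩
  intro f f' hf hbound hinit Λ hΛ
  set B : ℝ → ℝ := fun x => x ^ r * Q.eval (Real.log (x / ΛR)) with hB
  set B' : ℝ → ℝ := fun x =>
    r * x ^ (r - 1) * Q.eval (Real.log (x / ΛR)) + x ^ r * (P.eval (Real.log (x / ΛR)) * x⁻¹)
    with hB'
  have hBderiv : ∀ x, ΛR ≤ x → HasDerivAt B (B' x) x := by
    intro x hx
    have hx0 : 0 < x := hΛR.trans_le hx
    have h1 : HasDerivAt (fun y : ℝ => y ^ r) (r * x ^ (r - 1)) x :=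
      Real.hasDerivAt_rpow_const (Or.inl hx0.ne')
    have h2 : HasDerivAt (fun y : ℝ => y / ΛR) (1 / ΛR) x := by
      simpa using (hasDerivAt_id x).div_const ΛR
    have h3 : HasDerivAt (fun y : ℝ => Real.log (y / ΛR)) (x⁻¹) x := by
      have := (Real.hasDerivAt_log (by positivity : x / ΛR ≠ 0)).comp x h2
      refine this.congr_deriv ?_
      rw [inv_div, one_div, div_mul_eq_mul_div, mul_inv_cancel₀ hΛR.ne', one_div]
    have h4 : HasDerivAt (fun y : ℝ => Q.eval (Real.log (y / ΛR)))
        (P.eval (Real.log (x / ΛR)) * x⁻¹) x := by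
      have := (Q.hasDerivAt (Real.log (x / ΛR))).comp x h3
      rwa [hder] at this
    simpa [hB, hB', mul_comm, mul_assoc, mul_left_comm] using h1.fun_mul h4
  have hL : ∀ x, ΛR ≤ x → 0 ≤ Real.log (x / ΛR) := fun x hx =>
    Real.log_nonneg ((one_le_div hΛR).mpr hx)
  have key : ∀ x ∈ Icc ΛR Λ, ‖f x‖ ≤ B x := by
    refine image_norm_le_of_norm_deriv_right_le_deriv_boundary'
      (f' := f') (B := B) (B' := B')
      (fun x hx => ((hf x hx.1).continuousWithinAt).mono
        (fun y hy => hy.1 : Icc ΛR Λ ⊆ Ici ΛR))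
      (fun x hx => (hf x hx.1).mono (Ici_subset_Ici.mpr hx.1))
      ?_ (fun x hx => (hBderiv x hx.1).continuousAt.continuousWithinAt)
      (fun x hx => (hBderiv x hx.1).hasDerivWithinAt) ?_
    · have : B ΛR = c := by
        rw [hB]
        simp only [div_self hΛR.ne', Real.log_one, hQ0]
        have h5 : ΛR ^ r * ΛR ^ (-r) = 1 := by
          rw [← Real.rpow_add hΛR]; simp
        calc ΛR ^ r * (c * ΛR ^ (-r)) = ΛR ^ r * ΛR ^ (-r) * c := by ring
          _ = c := by rw [h5, one_mul]
      rw [Real.norm_eq_abs, this]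
      exact hinit
    · intro x hx
      have hx0 : 0 < x := hΛR.trans_le hx.1
      have h1 : |f' x| ≤ x ^ r * (P.eval (Real.log (x / ΛR)) * x⁻¹) := by
        have := hbound x hx.1
        rw [abs_mul, abs_of_pos hx0] at this
        rw [← le_div_iff₀' hx0] at this
        calc |f' x| ≤ x ^ r * P.eval (Real.log (x / ΛR)) / x := this
          _ = x ^ r * (P.eval (Real.log (x / ΛR)) * x⁻¹) := by ring
      have h2 : 0 ≤ r * x ^ (r - 1) * Q.eval (Real.log (x / ΛR)) := by
        have := eval_nonneg_of_coeff_nonneg Q hcoeff (hL x hx.1)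
        positivity
      rw [Real.norm_eq_abs, hB']
      linarith
  have := key Λ ⟨hΛ, le_refl Λ⟩
  rwa [Real.norm_eq_abs, hB] at this
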